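/- The coefficients g_p defined by g_{n−1}=1, (w₊+w₋)g_{n−1} − g_{n−2} = 1, the recursion w₊w₋ g_{p+2} − (w₊+w₋) g_{p+1} + g_p = 0 for 0 ≤ p ≤ n−3, together with w₊w₋ g₁ − (w₊+w₋)g₀ = 0 and w₊w₋ g₀ = K, have the unique solution g_p = (1−ρ^{p+1})(1−ρ^n)^{n−2−p}(ρ/(1−ρ^{n+1}))^{n−1−p} for 0 ≤ p ≤ n−1. -/
import Mathlib

lemma step_aux (a b ρ u : ℝ) (ha : a ≠ 0) (hb : b ≠ 0) (hρ : ρ ≠ 0) (e : ℤ) :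
    (a/b) * (ρ*(a/b)) * ((1 - ρ^2*u) * a^(e-2) * (ρ/b)^(e-1))
      - ((a/b) + ρ*(a/b)) * ((1 - ρ*u) * a^(e-1) * (ρ/b)^e)
      + (1-u) * a^e * (ρ/b)^(e+1) = 0 := by
  have hc : ρ/b ≠ 0 := div_ne_zero hρ hb
  rw [zpow_sub₀ ha, zpow_sub₀ ha, zpow_sub₀ hc, zpow_add₀ hc, zpow_one]
  have key : ∀ A C : ℝ, A ≠ 0 → C ≠ 0 →
      (a/b) * (ρ*(a/b)) * ((1 - ρ^2*u) * (A / a^2) * (C / (ρ/b)))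
      - ((a/b) + ρ*(a/b)) * ((1 - ρ*u) * (A / a^1) * C)
      + (1-u) * A * (C * (ρ/b)) = 0 := by
    intro A C hA hC
    field_simp
    ring
  exact key _ _ (zpow_ne_zero _ ha) (zpow_ne_zero _ hc)

/-- The recursion `g_{n−1}=1`, `(w₊+w₋)g_{n−1} − g_{n−2} = 1`,
`w₊w₋ g_{p+2} − (w₊+w₋) g_{p+1} + g_p = 0` (`0 ≤ p ≤ n−3`),
`w₊w₋ g₁ − (w₊+w₋)g₀ = 0`, `w₊w₋ g₀ = K` has the unique solution
`g_p = (1−ρ^{p+1})(1−ρⁿ)^{n−2−p}(ρ/(1−ρ^{n+1}))^{n−1−p}` for `0 ≤ p ≤ n−1`. -/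
theorem recursion_unique_solution (n : ℕ) (hn : 2 ≤ n) (ρ : ℝ)
    (hρ : ρ ∈ Set.Ioo (0:ℝ) 1) :
    let wp : ℝ := (1 - ρ ^ n) / (1 - ρ ^ (n + 1))
    let wm : ℝ := ρ * wp
    let K : ℝ := (1 - ρ) * ρ ^ n * (1 - ρ ^ n) ^ n / (1 - ρ ^ (n + 1)) ^ (n + 1)
    ∀ g : ℕ → ℝ,
      g (n - 1) = 1 →
      (wp + wm) * g (n - 1) - g (n - 2) = 1 →
      (∀ p : ℕ, p + 3 ≤ n → wp * wm * g (p + 2) - (wp + wm) * g (p + 1) + g p = 0) →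
      wp * wm * g 1 - (wp + wm) * g 0 = 0 →
      wp * wm * g 0 = K →
      ∀ p : ℕ, p ≤ n - 1 →
        g p = (1 - ρ ^ (p + 1)) * (1 - ρ ^ n) ^ ((n : ℤ) - 2 - p)
                * (ρ / (1 - ρ ^ (n + 1))) ^ ((n : ℤ) - 1 - p) := by
  obtain ⟨hρ0, hρ1⟩ := hρ
  intro wp wm K g h1 h2 h3 _ _ p hp
  have hwp : wp = (1 - ρ ^ n) / (1 - ρ ^ (n + 1)) := rfl
  have hwm : wm = ρ * ((1 - ρ ^ n) / (1 - ρ ^ (n + 1))) := rfl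
  have hρn : ρ ^ n < 1 := pow_lt_one₀ hρ0.le hρ1 (by omega)
  have hρn1 : ρ ^ (n+1) < 1 := pow_lt_one₀ hρ0.le hρ1 (by omega)
  have ha : (1 - ρ ^ n) ≠ 0 := by linarith
  have hb : (1 - ρ ^ (n+1)) ≠ 0 := by linarith
  have hρne : ρ ≠ 0 := ne_of_gt hρ0
  have key : ∀ k, k ≤ n - 1 →
      g (n-1-k) = (1 - ρ ^ ((n-1-k) + 1)) * (1 - ρ ^ n) ^ ((n : ℤ) - 2 - ((n-1-k : ℕ) : ℤ))
                * (ρ / (1 - ρ ^ (n + 1))) ^ ((n : ℤ) - 1 - ((n-1-k : ℕ) : ℤ)) := by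
    intro k
    induction k using Nat.strong_induction_on with
    | _ k IH =>
      intro hk
      match k, IH, hk with
      | 0, IH, hk =>
        have hsub : n - 1 - 0 = n - 1 := by omega
        have hsuc : n - 1 + 1 = n := by omega
        have hc1 : (n : ℤ) - 2 - ((n-1 : ℕ) : ℤ) = -1 := by omega
        have hc2 : (n : ℤ) - 1 - ((n-1 : ℕ) : ℤ) = 0 := by omega
        rw [hsub, h1, hsuc, hc1, hc2, zpow_zero, zpow_neg, zpow_one]
        field_simp
      | 1, IH, hk =>
        have hsub : n - 1 - 1 = n - 2 := by omega
        have hsuc : n - 2 + 1 = n - 1 := by omega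
        have hc1 : (n : ℤ) - 2 - ((n-2 : ℕ) : ℤ) = 0 := by omega
        have hc2 : (n : ℤ) - 1 - ((n-2 : ℕ) : ℤ) = 1 := by omega
        have hg : g (n-2) = (wp + wm) - 1 := by rw [h1] at h2; linarith
        rw [hsub, hsuc, hc1, hc2, zpow_zero, zpow_one, hg, hwp, hwm]
        have hρpow : ρ ^ n = ρ * ρ ^ (n-1) := by
          conv_lhs => rw [show n = (n-1) + 1 from by omega]
          rw [pow_succ]; ring
        have hρpow1 : ρ ^ (n+1) = ρ * ρ ^ n := by rw [pow_succ]; ring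
        field_simp
        rw [hρpow1, hρpow]
        ring
      | (k+2), IH, hk =>
        obtain ⟨q, hq0, hq1, hq2, hq3, hq4⟩ :
            ∃ q, n-1-(k+2) = q ∧ n-1-(k+1) = q+1 ∧ n-1-k = q+2 ∧ q+3 ≤ n
              ∧ ((q:ℤ) = (n:ℤ) - 3 - k) :=
          ⟨n-1-(k+2), rfl, by omega, by omega, by omega, by omega⟩
        have hg1 := IH (k+1) (by omega) (by omega)
        have hg2 := IH k (by omega) (by omega)
        rw [hq1] at hg1
        rw [hq2] at hg2
        rw [hq0]
        have hrec := h3 q hq3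
        set e : ℤ := (n : ℤ) - 2 - q with he
        have hc1 : (n : ℤ) - 2 - ((q+1 : ℕ) : ℤ) = e - 1 := by push_cast [he]; ring
        have hc2 : (n : ℤ) - 1 - ((q+1 : ℕ) : ℤ) = e := by push_cast [he]; ring
        have hc3 : (n : ℤ) - 2 - ((q+2 : ℕ) : ℤ) = e - 2 := by push_cast [he]; ring
        have hc4 : (n : ℤ) - 1 - ((q+2 : ℕ) : ℤ) = e - 1 := by push_cast [he]; ring
        have hc5 : (n : ℤ) - 1 - (q : ℤ) = e + 1 := by rw [he]; ring
        rw [hc1, hc2] at hg1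
        rw [hc3, hc4] at hg2
        have hp2 : ρ ^ (q+2+1) = ρ^2 * ρ^(q+1) := by
          rw [show q+2+1 = (q+1)+2 from by ring, pow_add]; ring
        have hp1 : ρ ^ (q+1+1) = ρ * ρ^(q+1) := by rw [pow_succ]; ring
        rw [hp2] at hg2
        rw [hp1] at hg1
        have hstep := step_aux (1 - ρ^n) (1 - ρ^(n+1)) ρ (ρ^(q+1)) ha hb hρne e
        rw [hc5]
        rw [hwp, hwm] at hrec
        rw [hg1, hg2] at hrec
        linarith [hrec, hstep]
  have hfin := key (n-1-p) (by omega)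
  rw [show n-1-(n-1-p) = p from by omega] at hfin
  exact hfin
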